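/- Let p be an odd prime, n \ge 1, S coprime to p, w an integer, and \alpha,\beta nonnegative integers with 2\alpha+\beta \le n. Then \sum_{x=0}^{p^n-1} e^{2\pi i S p^\beta (p^\alpha x + w)^2 / p^n} equals 0 if p^\alpha \nmid w, and equals p^{\alpha+\beta} G(S;p^{n-\beta}) if p^\alpha | w. -/

import Mathlib

open Finset

noncomputable def Gsum (S : ℤ) (k : ℕ) : ℂ :=
  ∑ x ∈ Finset.range k,
    Complex.exp (2 * Real.pi * Complex.I * ((S * (x : ℤ) ^ 2 : ℤ) : ℂ) / (k : ℂ))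

noncomputable def Gsum2 (a b c S : ℤ) (k : ℕ) : ℂ :=
  ∑ x ∈ Finset.range k, ∑ y ∈ Finset.range k,
    Complex.exp (2 * Real.pi * Complex.I *
      ((S * (a * (x : ℤ) ^ 2 + b * (x : ℤ) * (y : ℤ) + c * (y : ℤ) ^ 2) : ℤ) : ℂ) / (k : ℂ))


noncomputable def E (k : ℕ) (m : ℤ) : ℂ :=
  Complex.exp (2 * Real.pi * Complex.I * (m : ℂ) / (k : ℂ))

lemma E_add (k : ℕ) (a b : ℤ) : E k (a + b) = E k a * E k b := by
  rw [E, E, E, ← Complex.exp_add]; congr 1; push_cast; ring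

lemma E_int_mul (k : ℕ) (hk : k ≠ 0) (t : ℤ) : E k (k * t) = 1 := by
  have hk' : (k : ℂ) ≠ 0 := Nat.cast_ne_zero.mpr hk
  rw [E]
  have : 2 * Real.pi * Complex.I * (((k : ℤ) * t : ℤ) : ℂ) / (k : ℂ)
      = (t : ℂ) * (2 * Real.pi * Complex.I) := by
    push_cast; field_simp
  rw [this, Complex.exp_int_mul_two_pi_mul_I]

lemma E_dvd (k : ℕ) (hk : k ≠ 0) (m : ℤ) (h : (k : ℤ) ∣ m) : E k m = 1 := by
  obtain ⟨t, rfl⟩ := h; exact E_int_mul k hk t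

lemma E_eq_of_dvd_sub (k : ℕ) (hk : k ≠ 0) (a b : ℤ) (h : (k : ℤ) ∣ (a - b)) :
    E k a = E k b := by
  have ha : a = b + (a - b) := by ring
  rw [ha, E_add, E_dvd k hk _ h, mul_one]

lemma E_ne_one (k : ℕ) (hk : k ≠ 0) (m : ℤ) (h : ¬ (k : ℤ) ∣ m) : E k m ≠ 1 := by
  intro h1
  rw [E, Complex.exp_eq_one_iff] at h1
  obtain ⟨t, ht⟩ := h1
  apply h
  refine ⟨t, ?_⟩
  have hk' : (k : ℂ) ≠ 0 := Nat.cast_ne_zero.mpr hk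
  have hpi : (2 : ℂ) * Real.pi * Complex.I ≠ 0 := by
    simp [Real.pi_ne_zero, Complex.I_ne_zero]
  have hm : (m : ℂ) = (k : ℂ) * t := by
    have h2 : 2 * (Real.pi:ℂ) * Complex.I * (m : ℂ)
        = 2 * (Real.pi:ℂ) * Complex.I * ((k : ℂ) * t) := by
      field_simp at ht
      rw [ht]
    exact mul_left_cancel₀ hpi h2
  exact_mod_cast hm

lemma E_pow (k : ℕ) (c : ℤ) (z : ℕ) : E k (c * z) = (E k c) ^ z := by
  rw [E, E, ← Complex.exp_nat_mul]; congr 1; push_cast; ring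

lemma E_geom (k : ℕ) (hk : k ≠ 0) (c : ℤ) (h : ¬ (k : ℤ) ∣ c) :
    ∑ z ∈ Finset.range k, E k (c * z) = 0 := by
  have hne : E k c ≠ 1 := E_ne_one k hk c h
  rw [Finset.sum_congr rfl fun z _ => E_pow k c z, geom_sum_eq hne]
  have hk1 : (E k c) ^ k = 1 := by
    rw [← E_pow]; exact E_dvd k hk _ ⟨c, by ring⟩
  rw [hk1]; simp

lemma E_cancel (p : ℕ) (hp : p ≠ 0) (a b : ℕ) (c : ℤ) :
    E (p ^ (a + b)) ((p:ℤ) ^ a * c) = E (p ^ b) c := by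
  have hp' : (p : ℂ) ≠ 0 := Nat.cast_ne_zero.mpr hp
  rw [E, E]; congr 1
  push_cast
  rw [pow_add]
  field_simp

lemma sum_range_mul_decomp (f : ℕ → ℂ) (d m : ℕ) :
    ∑ x ∈ Finset.range (d * m), f x = ∑ i ∈ Finset.range m, ∑ j ∈ Finset.range d, f (d * i + j) := by
  induction m with
  | zero => simp
  | succ m ih =>
    rw [Finset.sum_range_succ, ← ih, Nat.mul_succ, Finset.sum_range_add]

lemma sum_range_shift (k : ℕ) (g : ℕ → ℂ) (hg : ∀ x, g (x + k) = g x) (t : ℕ) :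
    ∑ x ∈ Finset.range k, g (x + t) = ∑ x ∈ Finset.range k, g x := by
  induction t with
  | zero => simp
  | succ t ih =>
    have step : ∀ (h : ℕ → ℂ), (∀ x, h (x + k) = h x) →
        ∑ x ∈ Finset.range k, h (x + 1) = ∑ x ∈ Finset.range k, h x := by
      intro h hh
      have h1 : ∑ x ∈ Finset.range (k+1), h x = ∑ x ∈ Finset.range k, h (x+1) + h 0 :=
        Finset.sum_range_succ' h k
      have h2 : ∑ x ∈ Finset.range (k+1), h x = ∑ x ∈ Finset.range k, h x + h k :=
        Finset.sum_range_succ h k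
      have hk0 : h k = h 0 := by simpa using hh 0
      rw [h1, hk0] at h2
      linear_combination h2
    have hh : ∀ x, (fun y => g (y + t)) (x + k) = (fun y => g (y + t)) x := by
      intro x
      show g (x + k + t) = g (x + t)
      rw [show x + k + t = x + t + k by ring, hg]
    calc ∑ x ∈ Finset.range k, g (x + (t+1))
        = ∑ x ∈ Finset.range k, (fun y => g (y + t)) (x + 1) := by
          apply Finset.sum_congr rfl; intro x _
          show g (x + (t+1)) = g (x + 1 + t)
          rw [show x + (t+1) = x + 1 + t by ring]
      _ = ∑ x ∈ Finset.range k, (fun y => g (y + t)) x := step (fun y => g (y + t)) hh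
      _ = ∑ x ∈ Finset.range k, g x := ih

lemma Gsum_eq (S : ℤ) (k : ℕ) : Gsum S k = ∑ x ∈ Finset.range k, E k (S * (x:ℤ)^2) := rfl

lemma periodic_mul (g : ℕ → ℂ) (d : ℕ) (hg : ∀ x, g (x + d) = g x) :
    ∀ t x, g (x + d * t) = g x := by
  intro t
  induction t with
  | zero => simp
  | succ t ih =>
    intro x
    rw [Nat.mul_succ, show x + (d*t + d) = (x + d) + d*t by ring, ih, hg]

lemma sum_range_collapse (g : ℕ → ℂ) (d m : ℕ) (hg : ∀ x, g (x + d) = g x) :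
    ∑ x ∈ Finset.range (d * m), g x = (m : ℂ) * ∑ x ∈ Finset.range d, g x := by
  rw [sum_range_mul_decomp g d m]
  have h1 : ∀ i ∈ Finset.range m, ∑ j ∈ Finset.range d, g (d * i + j)
      = ∑ j ∈ Finset.range d, g j := by
    intro i _
    apply Finset.sum_congr rfl
    intro j _
    rw [show d * i + j = j + d * i by ring, periodic_mul g d hg i j]
  rw [Finset.sum_congr rfl h1, Finset.sum_const, Finset.card_range, nsmul_eq_mul]

lemma Gsum_step (p : ℕ) (hp : p.Prime) (hodd : p ≠ 2) (S : ℤ) (hS : ¬ (p:ℤ) ∣ S) (t : ℕ) :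
    Gsum S (p ^ (t + 2)) = (p : ℂ) * Gsum S (p ^ t) := by
  have hp0 : p ≠ 0 := hp.ne_zero
  have hpk : ∀ a : ℕ, p ^ a ≠ 0 := fun a => pow_ne_zero a hp0
  have hpI : Prime (p:ℤ) := Nat.prime_iff_prime_int.mp hp
  have hp2 : ¬ (p:ℤ) ∣ 2 := by
    rw [show (2:ℤ) = ((2:ℕ):ℤ) by norm_num, Int.natCast_dvd_natCast]
    intro hd
    exact hodd ((Nat.prime_dvd_prime_iff_eq hp Nat.prime_two).mp hd)
  rw [Gsum_eq, Gsum_eq]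
  have hsplit : p ^ (t+2) = p ^ (t+1) * p := by ring
  rw [hsplit, sum_range_mul_decomp]
  rw [← hsplit]
  have hterm : ∀ z ∈ Finset.range p, ∀ y ∈ Finset.range (p^(t+1)),
      E (p^(t+2)) (S * ((p^(t+1)*z + y : ℕ):ℤ)^2)
        = E (p^(t+2)) (S * (y:ℤ)^2) * E p (2*S*(y:ℤ) * (z:ℤ)) := by
    intro z _ y _
    have h1 : (S * ((p^(t+1)*z + y : ℕ):ℤ)^2)
        = (S * (y:ℤ)^2) + ((p:ℤ)^(t+1) * (2*S*(y:ℤ)*(z:ℤ)) + (p:ℤ)^(t+2) * (S * (p:ℤ)^t * (z:ℤ)^2)) := by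
      push_cast; ring
    have h2 := E_cancel p hp0 (t+1) 1 (2*S*(y:ℤ)*(z:ℤ))
    norm_num at h2
    have h3 : E (p^(t+2)) ((p:ℤ)^(t+2) * (S * (p:ℤ)^t * (z:ℤ)^2)) = 1 := by
      apply E_dvd _ (hpk _)
      exact ⟨S * (p:ℤ)^t * (z:ℤ)^2, by push_cast; ring⟩
    rw [h1, E_add, E_add, h2, h3, mul_one]
  rw [Finset.sum_congr rfl (fun z hz => Finset.sum_congr rfl (fun y hy => hterm z hz y hy))]
  rw [Finset.sum_comm]
  have hinner : ∀ y ∈ Finset.range (p^(t+1)),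
      ∑ z ∈ Finset.range p, E (p^(t+2)) (S * (y:ℤ)^2) * E p (2*S*(y:ℤ) * (z:ℤ))
        = E (p^(t+2)) (S * (y:ℤ)^2) * (if (p:ℤ) ∣ (y:ℤ) then (p:ℂ) else 0) := by
    intro y _
    rw [← Finset.mul_sum]
    congr 1
    by_cases hd : (p:ℤ) ∣ (y:ℤ)
    · rw [if_pos hd]
      have hone : ∀ z ∈ Finset.range p, E p (2*S*(y:ℤ) * (z:ℤ)) = 1 := by
        intro z _
        exact E_dvd p hp0 _ (Dvd.dvd.mul_right (Dvd.dvd.mul_left hd _) _)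
      rw [Finset.sum_congr rfl hone, Finset.sum_const, Finset.card_range]
      simp
    · rw [if_neg hd]
      apply E_geom p hp0
      intro hdvd
      rcases hpI.dvd_mul.mp hdvd with h' | h'
      · rcases hpI.dvd_mul.mp h' with h'' | h''
        · exact hp2 h''
        · exact hS h''
      · exact hd h'
  rw [Finset.sum_congr rfl hinner]
  have hsplit2 : p ^ (t+1) = p * p ^ t := by ring
  rw [hsplit2, sum_range_mul_decomp]
  have houter : ∀ u ∈ Finset.range (p^t),
      (∑ j ∈ Finset.range p, E (p^(t+2)) (S * (((p*u+j : ℕ)):ℤ)^2) * (if (p:ℤ) ∣ ((p*u+j:ℕ):ℤ) then (p:ℂ) else 0))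
        = (p:ℂ) * E (p^t) (S * (u:ℤ)^2) := by
    intro u _
    have h₀ : ∀ j ∈ Finset.range p, j ≠ 0 →
        E (p^(t+2)) (S * (((p*u+j : ℕ)):ℤ)^2) * (if (p:ℤ) ∣ ((p*u+j:ℕ):ℤ) then (p:ℂ) else 0) = 0 := by
      intro j hj hj0
      have hjlt : j < p := Finset.mem_range.mp hj
      have hnd : ¬ (p:ℤ) ∣ ((p*u+j:ℕ):ℤ) := by
        rw [Int.natCast_dvd_natCast]
        intro hd
        have hdj : p ∣ j := (Nat.dvd_add_right ⟨u, rfl⟩).mp hd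
        exact hj0 (Nat.eq_zero_of_dvd_of_lt hdj hjlt)
      rw [if_neg hnd, mul_zero]
    have h₁ : (0:ℕ) ∉ Finset.range p →
        E (p^(t+2)) (S * (((p*u+0 : ℕ)):ℤ)^2) * (if (p:ℤ) ∣ ((p*u+0:ℕ):ℤ) then (p:ℂ) else 0) = 0 :=
      fun h0 => absurd (Finset.mem_range.mpr hp.pos) h0
    rw [Finset.sum_eq_single 0 h₀ h₁]
    have hd0 : (p:ℤ) ∣ ((p*u+0:ℕ):ℤ) := by push_cast; simp
    rw [if_pos hd0]
    have hval : (S * (((p*u+0 : ℕ)):ℤ)^2) = (p:ℤ)^2 * (S * (u:ℤ)^2) := by push_cast; ring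
    rw [hval]
    have h4 := E_cancel p hp0 2 t (S * (u:ℤ)^2)
    rw [show (2:ℕ) + t = t + 2 by ring] at h4
    rw [h4]
    ring
  rw [Finset.sum_congr rfl houter, ← Finset.mul_sum]

lemma Gsum_iter (p : ℕ) (hp : p.Prime) (hodd : p ≠ 2) (S : ℤ) (hS : ¬ (p:ℤ) ∣ S) (t k : ℕ) :
    Gsum S (p ^ (t + 2 * k)) = (p : ℂ) ^ k * Gsum S (p ^ t) := by
  induction k with
  | zero => simp
  | succ k ih =>
    have : t + 2 * (k+1) = (t + 2*k) + 2 := by ring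
    rw [this, Gsum_step p hp hodd S hS, ih]
    ring

lemma summand_eq (p n : ℕ) (c : ℤ) :
    Complex.exp (2 * Real.pi * Complex.I * ((c : ℤ) : ℂ) / ((p:ℂ)^n)) = E (p^n) c := by
  rw [E, Nat.cast_pow]

theorem main2 (p : ℕ) (hp : p.Prime) (hodd : p ≠ 2) (n : ℕ) (hn : 0 < n)
    (S : ℤ) (hS : IsCoprime S (p : ℤ)) (w : ℤ) (α β : ℕ) (hα : α ≤ n) (hβ : β ≤ n)
    (h : 2 * α + β ≤ n) (hd : (p : ℤ) ^ α ∣ w) :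
      ∑ x ∈ Finset.range (p ^ n),
          Complex.exp (2 * Real.pi * Complex.I *
            ((S * (p : ℤ) ^ β * ((p : ℤ) ^ α * (x : ℤ) + w) ^ 2 : ℤ) : ℂ) / ((p : ℂ) ^ n)) =
        (p : ℂ) ^ (α + β) * Gsum S (p ^ (n - β)) := by
  have hp0 : p ≠ 0 := hp.ne_zero
  have hpk : ∀ a : ℕ, p ^ a ≠ 0 := fun a => pow_ne_zero a hp0
  have hpI : Prime (p:ℤ) := Nat.prime_iff_prime_int.mp hp
  have hpS : ¬ (p:ℤ) ∣ S := fun hdS => hpI.not_unit (hS.isUnit_of_dvd' hdS dvd_rfl)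
  obtain ⟨v, rfl⟩ := hd
  set m' : ℕ := n - (2*α + β) with hm'def
  have hm' : 2*α + β + m' = n := by omega
  set g : ℕ → ℂ := fun x => E (p^m') (S * ((x:ℤ) + v)^2) with hg
  have hstep1 : ∀ x : ℕ,
      Complex.exp (2 * Real.pi * Complex.I *
        ((S * (p : ℤ) ^ β * ((p : ℤ) ^ α * (x : ℤ) + (p:ℤ)^α * v) ^ 2 : ℤ) : ℂ) / ((p : ℂ) ^ n)) = g x := by
    intro x
    rw [summand_eq]
    have hval : S * (p : ℤ) ^ β * ((p : ℤ) ^ α * (x : ℤ) + (p:ℤ)^α * v) ^ 2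
        = (p:ℤ)^(2*α+β) * (S * ((x:ℤ) + v)^2) := by ring
    rw [hval]
    rw [show p ^ n = p ^ (2*α+β + m') by rw [hm']]
    exact E_cancel p hp0 (2*α+β) m' _
  rw [Finset.sum_congr rfl (fun x _ => hstep1 x)]
  have hper : ∀ x, g (x + p^m') = g x := by
    intro x
    apply E_eq_of_dvd_sub _ (hpk _)
    refine ⟨S * (2*((x:ℤ)+v) + (p:ℤ)^m'), ?_⟩
    push_cast
    ring
  have hcollapse : ∑ x ∈ Finset.range (p^n), g x
      = ((p^(2*α+β) : ℕ) : ℂ) * ∑ x ∈ Finset.range (p^m'), g x := by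
    rw [show p ^ n = p ^ m' * p ^ (2*α+β) by rw [← pow_add]; congr 1; omega]
    exact sum_range_collapse g _ _ hper
  rw [hcollapse]
  -- shift
  set v0 : ℕ := (v % ((p:ℤ)^m')).toNat with hv0def
  have hpm'pos : (0:ℤ) < (p:ℤ)^m' := by positivity
  have hv0 : (v0 : ℤ) = v % ((p:ℤ)^m') := Int.toNat_of_nonneg (Int.emod_nonneg v (ne_of_gt hpm'pos))
  have hdvd_v : ((p:ℕ)^m' : ℤ) ∣ (v - v0) := by
    rw [hv0, Int.emod_def]
    push_cast
    exact ⟨v / ((p:ℤ)^m'), by ring⟩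
  set g0 : ℕ → ℂ := fun x => E (p^m') (S * (x:ℤ)^2) with hg0
  have hg0per : ∀ x, g0 (x + p^m') = g0 x := by
    intro x
    apply E_eq_of_dvd_sub _ (hpk _)
    refine ⟨S * (2*(x:ℤ) + (p:ℤ)^m'), ?_⟩
    push_cast
    ring
  have hshift : ∀ x : ℕ, g x = g0 (x + v0) := by
    intro x
    apply E_eq_of_dvd_sub _ (hpk _)
    have : S * ((x:ℤ) + v)^2 - S * (((x + v0 : ℕ)):ℤ)^2
        = (v - v0) * (S * (2*(x:ℤ) + v + v0)) := by push_cast; ring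
    rw [this]
    exact Dvd.dvd.mul_right (by exact_mod_cast hdvd_v) _
  rw [Finset.sum_congr rfl (fun x _ => hshift x), sum_range_shift _ g0 hg0per v0]
  have hGs : ∑ x ∈ Finset.range (p^m'), g0 x = Gsum S (p^m') := (Gsum_eq S (p^m')).symm
  rw [hGs]
  have hiter : Gsum S (p ^ (n - β)) = (p:ℂ)^α * Gsum S (p^m') := by
    rw [show n - β = m' + 2*α by omega]
    exact Gsum_iter p hp hodd S hpS m' α
  rw [hiter]
  push_cast
  ring

theorem main1 (p : ℕ) (hp : p.Prime) (hodd : p ≠ 2) (n : ℕ) (hn : 0 < n)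
    (S : ℤ) (hS : IsCoprime S (p : ℤ)) (w : ℤ) (α β : ℕ) (hα : α ≤ n) (hβ : β ≤ n)
    (h : 2 * α + β ≤ n) (hnd : ¬ (p : ℤ) ^ α ∣ w) :
      ∑ x ∈ Finset.range (p ^ n),
          Complex.exp (2 * Real.pi * Complex.I *
            ((S * (p : ℤ) ^ β * ((p : ℤ) ^ α * (x : ℤ) + w) ^ 2 : ℤ) : ℂ) / ((p : ℂ) ^ n)) = 0 := by
  have hp0 : p ≠ 0 := hp.ne_zero
  have hpk : ∀ a : ℕ, p ^ a ≠ 0 := fun a => pow_ne_zero a hp0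
  have hpI : Prime (p:ℤ) := Nat.prime_iff_prime_int.mp hp
  have hpS : ¬ (p:ℤ) ∣ S := fun hdS => hpI.not_unit (hS.isUnit_of_dvd' hdS dvd_rfl)
  have hp2 : ¬ (p:ℤ) ∣ 2 := by
    rw [show (2:ℤ) = ((2:ℕ):ℤ) by norm_num, Int.natCast_dvd_natCast]
    intro hd2
    exact hodd ((Nat.prime_dvd_prime_iff_eq hp Nat.prime_two).mp hd2)
  have hw0 : w ≠ 0 := fun h0 => hnd (h0 ▸ dvd_zero _)
  have hfin : FiniteMultiplicity ((p:ℤ)) w :=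
    Int.finiteMultiplicity_iff.mpr ⟨by simpa using hp.ne_one, hw0⟩
  obtain ⟨u, hw, hu⟩ := hfin.exists_eq_pow_mul_and_not_dvd
  set γ : ℕ := multiplicity (p:ℤ) w with hγdef
  have hγα : γ < α := by
    by_contra hge
    push_neg at hge
    exact hnd (dvd_trans (pow_dvd_pow _ hge) (hw ▸ Dvd.intro u rfl))
  have hα1 : 1 ≤ α := by omega
  set a : ℕ := α - (γ + 1) with hadef
  have hαeq : α = γ + 1 + a := by omega
  set δ : ℕ := n - (α + β + γ + 1) with hδdef
  have hδeq : n = δ + α + β + γ + 1 := by omega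
  set T : ℕ := p ^ δ with hTdef
  set f : ℕ → ℂ := fun x => E (p^n) (S * (p:ℤ)^β * ((p:ℤ)^α * (x:ℤ) + w)^2) with hf
  have hsum : ∑ x ∈ Finset.range (p ^ n),
      Complex.exp (2 * Real.pi * Complex.I *
        ((S * (p : ℤ) ^ β * ((p : ℤ) ^ α * (x : ℤ) + w) ^ 2 : ℤ) : ℂ) / ((p : ℂ) ^ n))
      = ∑ x ∈ Finset.range (p ^ n), f x :=
    Finset.sum_congr rfl (fun x _ => summand_eq p n _)
  rw [hsum]
  have hper : ∀ x, f (x + p^n) = f x := by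
    intro x
    apply E_eq_of_dvd_sub _ (hpk _)
    refine ⟨S * (p:ℤ)^β * (2*(p:ℤ)^α*((p:ℤ)^α*(x:ℤ)+w) + (p:ℤ)^(2*α) * (p:ℤ)^n), ?_⟩
    push_cast
    ring
  set ζ : ℂ := E p (2*S*u) with hζ
  have hkey : ∀ x : ℕ, S * (p:ℤ)^β * ((p:ℤ)^α * ((x + T : ℕ):ℤ) + w)^2
      = (S * (p:ℤ)^β * ((p:ℤ)^α * (x:ℤ) + w)^2) + ((p:ℤ)^(n-1) * (2*S*u)
        + (p:ℤ)^n * (2*S*(x:ℤ)*(p:ℤ)^a + S*(p:ℤ)^(δ+a))) := by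
    intro x
    rw [hw, hαeq]
    rw [show n - 1 = δ + (γ+1+a) + β + γ by omega, show n = δ + (γ+1+a) + β + γ + 1 by omega]
    push_cast [hTdef]
    ring
  have hshift : ∀ x : ℕ, f (x + T) = ζ * f x := by
    intro x
    show E (p^n) _ = ζ * E (p^n) _
    rw [hkey x, E_add, E_add]
    have h2 : E (p^n) ((p:ℤ)^(n-1) * (2*S*u)) = ζ := by
      have hc := E_cancel p hp0 (n-1) 1 (2*S*u)
      rw [Nat.sub_add_cancel hn, pow_one] at hc
      rw [hc]
    have h3 : E (p^n) ((p:ℤ)^n * (2*S*(x:ℤ)*(p:ℤ)^a + S*(p:ℤ)^(δ+a))) = 1 := by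
      apply E_dvd _ (hpk _)
      refine ⟨2*S*(x:ℤ)*(p:ℤ)^a + S*(p:ℤ)^(δ+a), ?_⟩
      push_cast
      ring
    rw [h2, h3, mul_one]
    ring
  have hrot : ∑ x ∈ Finset.range (p^n), f (x + T) = ∑ x ∈ Finset.range (p^n), f x :=
    sum_range_shift _ f hper T
  have heq : ∑ x ∈ Finset.range (p^n), f x = ζ * ∑ x ∈ Finset.range (p^n), f x := by
    conv_lhs => rw [← hrot]
    rw [Finset.sum_congr rfl (fun x _ => hshift x), ← Finset.mul_sum]
  have hζne : ζ ≠ 1 := by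
    apply E_ne_one p hp0
    intro hdvd
    rcases hpI.dvd_mul.mp hdvd with h' | h'
    · rcases hpI.dvd_mul.mp h' with h'' | h''
      · exact hp2 h''
      · exact hpS h''
    · exact hu h'
  have hfactor : (ζ - 1) * ∑ x ∈ Finset.range (p^n), f x = 0 := by
    rw [sub_mul, one_mul, ← heq, sub_self]
  rcases mul_eq_zero.mp hfactor with h' | h'
  · exact absurd (sub_eq_zero.mp h') hζne
  · exact h'

theorem stmt_10 (p : ℕ) (hp : p.Prime) (hodd : p ≠ 2) (n : ℕ) (hn : 0 < n)
    (S : ℤ) (hS : IsCoprime S (p : ℤ)) (w : ℤ) (α β : ℕ) (hα : α ≤ n) (hβ : β ≤ n)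
    (h : 2 * α + β ≤ n) :
    (¬ (p : ℤ) ^ α ∣ w →
      ∑ x ∈ Finset.range (p ^ n),
          Complex.exp (2 * Real.pi * Complex.I *
            ((S * (p : ℤ) ^ β * ((p : ℤ) ^ α * (x : ℤ) + w) ^ 2 : ℤ) : ℂ) / ((p : ℂ) ^ n)) = 0) ∧
    ((p : ℤ) ^ α ∣ w →
      ∑ x ∈ Finset.range (p ^ n),
          Complex.exp (2 * Real.pi * Complex.I *
            ((S * (p : ℤ) ^ β * ((p : ℤ) ^ α * (x : ℤ) + w) ^ 2 : ℤ) : ℂ) / ((p : ℂ) ^ n)) =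
        (p : ℂ) ^ (α + β) * Gsum S (p ^ (n - β))) :=
  ⟨main1 p hp hodd n hn S hS w α β hα hβ h, main2 p hp hodd n hn S hS w α β hα hβ h⟩
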